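/- Fix Δx, Δy > 0. Let D_x^±(η) = Σ_{j=0}^{2} a_j^± φ_j(η) and D_y^±(ξ) = Σ_{j=0}^{2} b_j^± φ_j(ξ) be degree-2 face polynomials satisfying (a₀⁺ − a₀⁻)Δy + (b₀⁺ − b₀⁻)Δx = 0. Then there exists exactly one vector field D = (Dx, Dy) on [−1/2,1/2]² with Dx in the span of { 1, φ₁(ξ), φ₁(η), φ₂(ξ), φ₁(ξ)φ₁(η), φ₂(η), φ₃(ξ), φ₁(ξ)φ₂(η) } and Dy in the span of { 1, φ₁(ξ), φ₁(η), φ₂(ξ), φ₁(ξ)φ₁(η), φ₂(η), φ₂(ξ)φ₁(η), φ₃(η) } such that Dx(±1/2, η) = D_x^±(η), Dy(ξ, ±1/2) = D_y^±(ξ), and (1/Δx)∂_ξ Dx + (1/Δy)∂_η Dy ≡ 0; in particular the face data alone determines the third-order divergence-free reconstruction. -/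

import Mathlib

set_option maxHeartbeats 2000000


/-- The orthogonal basis polynomials on `[-1/2, 1/2]`. -/
noncomputable def phi : ℕ → ℝ → ℝ
  | 0, _ => 1
  | 1, x => x
  | 2, x => x ^ 2 - 1 / 12
  | 3, x => x ^ 3 - 3 / 20 * x
  | 4, x => x ^ 4 - 3 / 14 * x ^ 2 + 3 / 560
  | 5, x => x ^ 5 - 5 / 18 * x ^ 3 + 5 / 336 * x
  | _, _ => 0

lemma cubic_hasDerivAt (A B C E x : ℝ) :
    HasDerivAt (fun t : ℝ => A + B * t + C * t ^ 2 + E * t ^ 3)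
      (B + 2 * C * x + 3 * E * x ^ 2) x := by
  have h := (((hasDerivAt_const x A).add ((hasDerivAt_id x).const_mul B)).add
    ((hasDerivAt_pow 2 x).const_mul C)).add ((hasDerivAt_pow 3 x).const_mul E)
  exact h.congr_deriv (by norm_num; ring)

noncomputable def DxSol (Δx Δy : ℝ) (ap am bp bm : ℕ → ℝ) : ℝ × ℝ → ℝ := fun p =>
  ((ap 0 + am 0)/2 + Δx*(bp 1 - bm 1)/(12*Δy))
  + ((ap 0 - am 0) + Δx*(bp 2 - bm 2)/(30*Δy)) * p.1
  + ((ap 1 + am 1)/2) * p.2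
  + (-(Δx*(bp 1 - bm 1))/(2*Δy)) * (p.1^2 - 1/12)
  + (ap 1 - am 1) * (p.1*p.2)
  + ((ap 2 + am 2)/2) * (p.2^2 - 1/12)
  + (-(Δx*(bp 2 - bm 2))/(3*Δy)) * (p.1^3 - 3/20*p.1)
  + (ap 2 - am 2) * (p.1*(p.2^2 - 1/12))

noncomputable def DySol (Δx Δy : ℝ) (ap am bp bm : ℕ → ℝ) : ℝ × ℝ → ℝ := fun p =>
  ((bp 0 + bm 0)/2 + Δy*(ap 1 - am 1)/(12*Δx))
  + ((bp 1 + bm 1)/2) * p.1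
  + ((bp 0 - bm 0) + Δy*(ap 2 - am 2)/(30*Δx)) * p.2
  + ((bp 2 + bm 2)/2) * (p.1^2 - 1/12)
  + (bp 1 - bm 1) * (p.1*p.2)
  + (-(Δy*(ap 1 - am 1))/(2*Δx)) * (p.2^2 - 1/12)
  + (bp 2 - bm 2) * ((p.1^2 - 1/12)*p.2)
  + (-(Δy*(ap 2 - am 2))/(3*Δx)) * (p.2^3 - 3/20*p.2)

/-- Third-order divergence-free reconstruction: given degree-2 face
polynomials satisfying the compatibility condition, the face data alone determines a
unique divergence-free vector field in the given spans matching the faces. -/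
theorem third_order_divfree_reconstruction
    (Δx Δy : ℝ) (hΔx : 0 < Δx) (hΔy : 0 < Δy)
    (ap am bp bm : ℕ → ℝ)
    (hcompat : (ap 0 - am 0) * Δy + (bp 0 - bm 0) * Δx = 0) :
    ∃! D : (ℝ × ℝ → ℝ) × (ℝ × ℝ → ℝ),
      D.1 ∈ Submodule.span ℝ
        ({fun p => phi 0 p.1 * phi 0 p.2, fun p => phi 1 p.1 * phi 0 p.2,
          fun p => phi 0 p.1 * phi 1 p.2, fun p => phi 2 p.1 * phi 0 p.2,
          fun p => phi 1 p.1 * phi 1 p.2, fun p => phi 0 p.1 * phi 2 p.2,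
          fun p => phi 3 p.1 * phi 0 p.2, fun p => phi 1 p.1 * phi 2 p.2} :
          Set (ℝ × ℝ → ℝ)) ∧
      D.2 ∈ Submodule.span ℝ
        ({fun p => phi 0 p.1 * phi 0 p.2, fun p => phi 1 p.1 * phi 0 p.2,
          fun p => phi 0 p.1 * phi 1 p.2, fun p => phi 2 p.1 * phi 0 p.2,
          fun p => phi 1 p.1 * phi 1 p.2, fun p => phi 0 p.1 * phi 2 p.2,
          fun p => phi 2 p.1 * phi 1 p.2, fun p => phi 0 p.1 * phi 3 p.2} :
          Set (ℝ × ℝ → ℝ)) ∧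
      (∀ η ∈ Set.Icc (-(1:ℝ)/2) (1/2),
        D.1 (1/2, η) = ∑ j ∈ Finset.range 3, ap j * phi j η) ∧
      (∀ η ∈ Set.Icc (-(1:ℝ)/2) (1/2),
        D.1 (-(1/2), η) = ∑ j ∈ Finset.range 3, am j * phi j η) ∧
      (∀ ξ ∈ Set.Icc (-(1:ℝ)/2) (1/2),
        D.2 (ξ, 1/2) = ∑ j ∈ Finset.range 3, bp j * phi j ξ) ∧
      (∀ ξ ∈ Set.Icc (-(1:ℝ)/2) (1/2),
        D.2 (ξ, -(1/2)) = ∑ j ∈ Finset.range 3, bm j * phi j ξ) ∧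
      (∀ p ∈ (Set.Icc (-(1:ℝ)/2) (1/2)) ×ˢ (Set.Icc (-(1:ℝ)/2) (1/2)),
        (1 / Δx) * deriv (fun ξ => D.1 (ξ, p.2)) p.1
          + (1 / Δy) * deriv (fun η => D.2 (p.1, η)) p.2 = 0) := by
  have hx0 : Δx ≠ 0 := ne_of_gt hΔx
  have hy0 : Δy ≠ 0 := ne_of_gt hΔy
  refine ⟨(DxSol Δx Δy ap am bp bm, DySol Δx Δy ap am bp bm),
    ⟨?_, ?_, ?_, ?_, ?_, ?_, ?_⟩, ?_⟩
  · -- span membership Dx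
    simp only [Submodule.mem_span_insert, Submodule.mem_span_singleton]
    refine ⟨((ap 0 + am 0)/2 + Δx*(bp 1 - bm 1)/(12*Δy)), _,
      ⟨((ap 0 - am 0) + Δx*(bp 2 - bm 2)/(30*Δy)), _,
      ⟨((ap 1 + am 1)/2), _,
      ⟨(-(Δx*(bp 1 - bm 1))/(2*Δy)), _,
      ⟨(ap 1 - am 1), _,
      ⟨((ap 2 + am 2)/2), _,
      ⟨(-(Δx*(bp 2 - bm 2))/(3*Δy)), _,
      ⟨(ap 2 - am 2), rfl⟩, rfl⟩, rfl⟩, rfl⟩, rfl⟩, rfl⟩, rfl⟩, ?_⟩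
    funext p
    simp [DxSol, phi]
    ring
  · -- span membership Dy
    simp only [Submodule.mem_span_insert, Submodule.mem_span_singleton]
    refine ⟨((bp 0 + bm 0)/2 + Δy*(ap 1 - am 1)/(12*Δx)), _,
      ⟨((bp 1 + bm 1)/2), _,
      ⟨((bp 0 - bm 0) + Δy*(ap 2 - am 2)/(30*Δx)), _,
      ⟨((bp 2 + bm 2)/2), _,
      ⟨(bp 1 - bm 1), _,
      ⟨(-(Δy*(ap 1 - am 1))/(2*Δx)), _,
      ⟨(bp 2 - bm 2), _,
      ⟨(-(Δy*(ap 2 - am 2))/(3*Δx)), rfl⟩, rfl⟩, rfl⟩, rfl⟩, rfl⟩, rfl⟩, rfl⟩, ?_⟩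
    funext p
    simp [DySol, phi]
    ring
  · intro η _
    simp [DxSol, phi, Finset.sum_range_succ]
    field_simp
    ring
  · intro η _
    simp [DxSol, phi, Finset.sum_range_succ]
    field_simp
    ring
  · intro ξ _
    simp [DySol, phi, Finset.sum_range_succ]
    field_simp
    ring
  · intro ξ _
    simp [DySol, phi, Finset.sum_range_succ]
    field_simp
    ring
  · -- divergence free
    rintro ⟨ξ, η⟩ _
    have hfx : (fun t => DxSol Δx Δy ap am bp bm (t, η)) =
        fun t => (((ap 0 + am 0)/2 + Δx*(bp 1 - bm 1)/(12*Δy))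
            + ((ap 1 + am 1)/2) * η + ((ap 2 + am 2)/2) * (η^2 - 1/12)
            + (-(Δx*(bp 1 - bm 1))/(2*Δy)) * (-(1/12)))
          + (((ap 0 - am 0) + Δx*(bp 2 - bm 2)/(30*Δy))
            + (ap 1 - am 1) * η
            + (-(Δx*(bp 2 - bm 2))/(3*Δy)) * (-(3/20))
            + (ap 2 - am 2) * (η^2 - 1/12)) * t
          + (-(Δx*(bp 1 - bm 1))/(2*Δy)) * t^2
          + (-(Δx*(bp 2 - bm 2))/(3*Δy)) * t^3 := by
      funext t; simp [DxSol]; ring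
    have hfy : (fun t => DySol Δx Δy ap am bp bm (ξ, t)) =
        fun t => (((bp 0 + bm 0)/2 + Δy*(ap 1 - am 1)/(12*Δx))
            + ((bp 1 + bm 1)/2) * ξ + ((bp 2 + bm 2)/2) * (ξ^2 - 1/12)
            + (-(Δy*(ap 1 - am 1))/(2*Δx)) * (-(1/12)))
          + (((bp 0 - bm 0) + Δy*(ap 2 - am 2)/(30*Δx))
            + (bp 1 - bm 1) * ξ
            + (-(Δy*(ap 2 - am 2))/(3*Δx)) * (-(3/20))
            + (bp 2 - bm 2) * (ξ^2 - 1/12)) * t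
          + (-(Δy*(ap 1 - am 1))/(2*Δx)) * t^2
          + (-(Δy*(ap 2 - am 2))/(3*Δx)) * t^3 := by
      funext t; simp [DySol]; ring
    simp only
    rw [hfx, hfy, (cubic_hasDerivAt _ _ _ _ ξ).deriv, (cubic_hasDerivAt _ _ _ _ η).deriv]
    field_simp
    linear_combination 7200 * hcompat
  · rintro ⟨Ex, Ey⟩ ⟨hsx, hsy, hfxp, hfxm, hfyp, hfym, hdiv⟩
    simp only [Submodule.mem_span_insert, Submodule.mem_span_singleton] at hsx hsy
    obtain ⟨e0, _, ⟨e1, _, ⟨e2, _, ⟨e3, _, ⟨e4, _, ⟨e5, _, ⟨e6, _, ⟨e7, rfl⟩,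
      rfl⟩, rfl⟩, rfl⟩, rfl⟩, rfl⟩, rfl⟩, hEx⟩ := hsx
    obtain ⟨g0, _, ⟨g1, _, ⟨g2, _, ⟨g3, _, ⟨g4, _, ⟨g5, _, ⟨g6, _, ⟨g7, rfl⟩,
      rfl⟩, rfl⟩, rfl⟩, rfl⟩, rfl⟩, rfl⟩, hEy⟩ := hsy
    have hEx' : ∀ a b : ℝ, Ex (a, b) = e0 + e1*a + e2*b + e3*(a^2-1/12) + e4*(a*b)
        + e5*(b^2-1/12) + e6*(a^3-3/20*a) + e7*(a*(b^2-1/12)) := by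
      intro a b; rw [hEx]; simp [phi]; ring
    have hEy' : ∀ a b : ℝ, Ey (a, b) = g0 + g1*a + g2*b + g3*(a^2-1/12) + g4*(a*b)
        + g5*(b^2-1/12) + g6*((a^2-1/12)*b) + g7*(b^3-3/20*b) := by
      intro a b; rw [hEy]; simp [phi]; ring
    have hdx : ∀ a b : ℝ, deriv (fun t => Ex (t, b)) a
        = (e1 - e6*(3/20) + e4*b + e7*(b^2-1/12)) + 2*e3*a + 3*e6*a^2 := by
      intro a b
      have h : (fun t => Ex (t, b)) = fun t =>
          (e0 + e2*b + e5*(b^2-1/12) - e3/12)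
          + ((e1 - e6*(3/20) + e4*b + e7*(b^2-1/12)))*t + e3*t^2 + e6*t^3 := by
        funext t; rw [hEx']; ring
      rw [h, (cubic_hasDerivAt _ _ _ _ a).deriv]
    have hdy : ∀ a b : ℝ, deriv (fun t => Ey (a, t)) b
        = (g2 - g7*(3/20) + g4*a + g6*(a^2-1/12)) + 2*g5*b + 3*g7*b^2 := by
      intro a b
      have h : (fun t => Ey (a, t)) = fun t =>
          (g0 + g1*a + g3*(a^2-1/12) - g5/12)
          + ((g2 - g7*(3/20) + g4*a + g6*(a^2-1/12)))*t + g5*t^2 + g7*t^3 := by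
        funext t; rw [hEy']; ring
      rw [h, (cubic_hasDerivAt _ _ _ _ b).deriv]
    have P1 := hfxp 0 (by norm_num); have P2 := hfxp (1/2) (by norm_num)
    have P3 := hfxp (-(1/2)) (by norm_num)
    have M1 := hfxm 0 (by norm_num); have M2 := hfxm (1/2) (by norm_num)
    have M3 := hfxm (-(1/2)) (by norm_num)
    have Q1 := hfyp 0 (by norm_num); have Q2 := hfyp (1/2) (by norm_num)
    have Q3 := hfyp (-(1/2)) (by norm_num)
    have N1 := hfym 0 (by norm_num); have N2 := hfym (1/2) (by norm_num)
    have N3 := hfym (-(1/2)) (by norm_num)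
    simp only [hEx', hEy', Finset.sum_range_succ, Finset.sum_range_zero, phi] at P1 P2 P3 M1 M2 M3 Q1 Q2 Q3 N1 N2 N3
    norm_num at P1 P2 P3 M1 M2 M3 Q1 Q2 Q3 N1 N2 N3
    have V1 := hdiv (0, 0) ⟨⟨by norm_num, by norm_num⟩, ⟨by norm_num, by norm_num⟩⟩
    have V2 := hdiv (1/2, 0) ⟨⟨by norm_num, by norm_num⟩, ⟨by norm_num, by norm_num⟩⟩
    have V3 := hdiv (-(1/2), 0) ⟨⟨by norm_num, by norm_num⟩, ⟨by norm_num, by norm_num⟩⟩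
    have V4 := hdiv (0, 1/2) ⟨⟨by norm_num, by norm_num⟩, ⟨by norm_num, by norm_num⟩⟩
    have V5 := hdiv (0, -(1/2)) ⟨⟨by norm_num, by norm_num⟩, ⟨by norm_num, by norm_num⟩⟩
    simp only [hdx, hdy] at V1 V2 V3 V4 V5
    norm_num at V1 V2 V3 V4 V5
    field_simp at V1 V2 V3 V4 V5
    have he2 : e2 = (ap 1 + am 1)/2 := by linarith
    have he4 : e4 = ap 1 - am 1 := by linarith
    have he5 : e5 = (ap 2 + am 2)/2 := by linarith
    have he7 : e7 = ap 2 - am 2 := by linarith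
    have hg1 : g1 = (bp 1 + bm 1)/2 := by linarith
    have hg4 : g4 = bp 1 - bm 1 := by linarith
    have hg3 : g3 = (bp 2 + bm 2)/2 := by linarith
    have hg6 : g6 = bp 2 - bm 2 := by linarith
    have L1 : e1 + e6/10 = ap 0 - am 0 := by linarith
    have L2 : e0 + e3/6 = (ap 0 + am 0)/2 := by linarith
    have L3 : g2 + g7/10 = bp 0 - bm 0 := by linarith
    have L4 : g0 + g5/6 = (bp 0 + bm 0)/2 := by linarith
    have he3' : e3 * (2 * Δy) = -(Δx * (bp 1 - bm 1)) := by
      linear_combination (V2 - V3)/11520 - Δx * hg4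
    have he6' : e6 * (3 * Δy) = -(Δx * (bp 2 - bm 2)) := by
      linear_combination (V2 + V3)/5760 - V1/60 - Δx * hg6
    have hg5' : g5 * (2 * Δx) = -(Δy * (ap 1 - am 1)) := by
      linear_combination (V4 - V5)/11520 - Δy * he4
    have hg7' : g7 * (3 * Δx) = -(Δy * (ap 2 - am 2)) := by
      linear_combination (V4 + V5)/5760 - V1/60 - Δy * he7
    have he3 : e3 = -(Δx*(bp 1 - bm 1))/(2*Δy) := by
      field_simp; linear_combination he3'
    have he6 : e6 = -(Δx*(bp 2 - bm 2))/(3*Δy) := by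
      field_simp; linear_combination he6'
    have hg5 : g5 = -(Δy*(ap 1 - am 1))/(2*Δx) := by
      field_simp; linear_combination hg5'
    have hg7 : g7 = -(Δy*(ap 2 - am 2))/(3*Δx) := by
      field_simp; linear_combination hg7'
    have he1 : e1 = (ap 0 - am 0) + Δx*(bp 2 - bm 2)/(30*Δy) := by
      field_simp; linear_combination 30*Δy*L1 - he6'
    have he0 : e0 = (ap 0 + am 0)/2 + Δx*(bp 1 - bm 1)/(12*Δy) := by
      field_simp; linear_combination 24*Δy*L2 - 2*he3'
    have hg2 : g2 = (bp 0 - bm 0) + Δy*(ap 2 - am 2)/(30*Δx) := by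
      field_simp; linear_combination 30*Δx*L3 - hg7'
    have hg0 : g0 = (bp 0 + bm 0)/2 + Δy*(ap 1 - am 1)/(12*Δx) := by
      field_simp; linear_combination 24*Δx*L4 - 2*hg5'
    simp only [Prod.mk.injEq]
    constructor
    · funext p
      rw [show Ex p = Ex (p.1, p.2) from rfl, hEx']
      simp only [DxSol]
      linear_combination he0 + p.1 * he1 + p.2 * he2 + (p.1^2-1/12) * he3
        + (p.1*p.2) * he4 + (p.2^2-1/12) * he5 + (p.1^3-3/20*p.1) * he6
        + (p.1*(p.2^2-1/12)) * he7
    · funext p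
      rw [show Ey p = Ey (p.1, p.2) from rfl, hEy']
      simp only [DySol]
      linear_combination hg0 + p.1 * hg1 + p.2 * hg2 + (p.1^2-1/12) * hg3
        + (p.1*p.2) * hg4 + (p.2^2-1/12) * hg5 + ((p.1^2-1/12)*p.2) * hg6
        + (p.2^3-3/20*p.2) * hg7
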